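/- arXiv:1810.04598 — 3 statements merged into one kernel-verified Lean document; each statement's English description precedes it below -/
import Mathlib

section
/- Let w ∈ M_m(ℂ) have positive definite imaginary part Im w = (w − w*)/(2i), and let x₁,…,x_k be self-adjoint elements of a unital C*-algebra A with self-adjoint coefficient matrices α₁,…,α_k ∈ M_m(ℂ). Then w ⊗ 1_A − Σⱼ αⱼ ⊗ xⱼ is invertible in M_m(A) and ‖(w ⊗ 1_A − Σⱼ αⱼ ⊗ xⱼ)⁻¹‖ ≤ ‖(Im w)⁻¹‖. -/
open Matrix
open scoped Matrix.Norms.L2Operator ComplexOrder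

private lemma aux_id1 {R : Type*} [Ring R] [Algebra ℂ R] (a₀ b₀ u : R)
    (h1 : b₀ * u = 1) (h2 : u * b₀ = 1) :
    (a₀ + Complex.I • b₀) * (u * (a₀ - Complex.I • b₀)) = a₀ * (u * a₀) + b₀ := by
  have e1 : b₀ * (u * a₀) = a₀ := by rw [← mul_assoc, h1, one_mul]
  simp only [mul_sub, sub_mul, mul_add, add_mul, smul_mul_assoc, mul_smul_comm, smul_smul,
    smul_add, smul_sub, h1, h2, e1, mul_one, one_mul, Complex.I_mul_I, neg_smul, one_smul]
  abel

private lemma aux_id2 {R : Type*} [Ring R] [Algebra ℂ R] (a₀ b₀ u : R)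
    (h1 : b₀ * u = 1) (h2 : u * b₀ = 1) :
    (a₀ - Complex.I • b₀) * (u * (a₀ + Complex.I • b₀)) = a₀ * (u * a₀) + b₀ := by
  have e1 : b₀ * (u * a₀) = a₀ := by rw [← mul_assoc, h1, one_mul]
  simp only [mul_sub, sub_mul, mul_add, add_mul, smul_mul_assoc, mul_smul_comm, smul_smul,
    smul_add, smul_sub, h1, h2, e1, mul_one, one_mul, Complex.I_mul_I, neg_smul, one_smul]
  abel

set_option maxHeartbeats 2000000 in
/-- If `Im w := (w - w*)/(2i)` is positive definite, `x₁,…,x_k` are self-adjoint in a unital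
C*-algebra `A` and `α₁,…,α_k` are Hermitian matrices, then `T := w ⊗ 1 - ∑ⱼ αⱼ ⊗ xⱼ` is
invertible in `M_m(A)` and `‖T⁻¹‖ ≤ ‖(Im w)⁻¹‖.  Since the C*-norm on `M_m(A)` is unique,
it is realized here through an arbitrary injective unital *-embedding `π` of `M_m(A)` into
a unital C*-algebra `B`. -/
theorem norm_inv_resolvent_le {A : Type*} [NormedRing A] [StarRing A] [CStarRing A]
    [CompleteSpace A] [NormedAlgebra ℂ A] [StarModule ℂ A]
    (m k : ℕ)
    (w : Matrix (Fin m) (Fin m) ℂ)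
    (hw : (((2 * Complex.I)⁻¹ : ℂ) • (w - wᴴ)).PosDef)
    (x : Fin k → A) (hx : ∀ j, IsSelfAdjoint (x j))
    (α : Fin k → Matrix (Fin m) (Fin m) ℂ) (hα : ∀ j, (α j).IsHermitian)
    {B : Type*} [NormedRing B] [StarRing B] [CStarRing B] [CompleteSpace B]
    [NormedAlgebra ℂ B] [StarModule ℂ B]
    (π : Matrix (Fin m) (Fin m) A →⋆ₐ[ℂ] B) (hπ : Function.Injective π) :
    IsUnit (w.map (algebraMap ℂ A) - ∑ j, (α j).map (fun c => c • x j)) ∧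
      ‖Ring.inverse (π (w.map (algebraMap ℂ A) - ∑ j, (α j).map (fun c => c • x j)))‖ ≤
        ‖((((2 * Complex.I)⁻¹ : ℂ) • (w - wᴴ))⁻¹ : Matrix (Fin m) (Fin m) ℂ)‖ := by
  classical
  -- trivial case `m = 0`
  rcases Nat.eq_zero_or_pos m with hm | hm
  · subst hm
    haveI : Subsingleton (Matrix (Fin 0) (Fin 0) A) :=
      ⟨fun M N => Matrix.ext fun i _ => i.elim0⟩
    have h10 : (1 : Matrix (Fin 0) (Fin 0) A) = 0 := Subsingleton.elim _ _
    have h01 : (0 : B) = 1 := by rw [← _root_.map_one π, h10, _root_.map_zero]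
    haveI : Subsingleton B := subsingleton_of_zero_eq_one h01
    refine ⟨isUnit_of_subsingleton _, ?_⟩
    rw [Subsingleton.elim (Ring.inverse (π _)) (0 : B), norm_zero]
    exact norm_nonneg _
  haveI : Nonempty (Fin m) := ⟨⟨0, hm⟩⟩
  letI : CStarAlgebra A := { }
  letI : CStarAlgebra B := { }
  letI : PartialOrder B := CStarAlgebra.spectralOrder B
  letI : StarOrderedRing B := CStarAlgebra.spectralOrderedRing B
  letI : CStarAlgebra (Matrix (Fin m) (Fin m) ℂ) := { }
  have h2I : (2 * Complex.I : ℂ) ≠ 0 := by simp [Complex.I_ne_zero]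
  set S : Matrix (Fin m) (Fin m) ℂ := (((2 * Complex.I)⁻¹ : ℂ) • (w - wᴴ)) with hSdef
  set T : Matrix (Fin m) (Fin m) A :=
    w.map (algebraMap ℂ A) - ∑ j, (α j).map (fun c => c • x j) with hTdef
  set μ : ℝ := ‖(S⁻¹ : Matrix (Fin m) (Fin m) ℂ)‖ with hμdef
  have hS : S.PosDef := hw
  have hSH : Sᴴ = S := hS.1
  -- μ > 0
  have hdetS : IsUnit S.det := (Matrix.isUnit_iff_isUnit_det S).mp hS.isUnit
  have hμpos : 0 < μ := by
    rw [hμdef, norm_pos_iff]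
    intro h
    have h1 : (1 : Matrix (Fin m) (Fin m) ℂ) = 0 := by
      rw [← Matrix.nonsing_inv_mul S hdetS, h, zero_mul]
    have h2 : (1 : ℂ) = 0 := by
      simpa [Matrix.one_apply] using congr_fun (congr_fun h1 ⟨0, hm⟩) ⟨0, hm⟩
    exact one_ne_zero h2
  -- the embedding ι : M_m(ℂ) → M_m(A)
  have hsemi : Function.Semiconj (⇑(Algebra.ofId ℂ A)) star star := fun z => by
    simpa [Algebra.ofId_apply] using (algebraMap_star_comm (R := ℂ) (A := A) z)
  let ι : Matrix (Fin m) (Fin m) ℂ →⋆ₐ[ℂ] Matrix (Fin m) (Fin m) A :=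
    { (Algebra.ofId ℂ A).mapMatrix (m := Fin m) with
      map_star' := fun M => by
        show (star M).map ⇑(Algebra.ofId ℂ A) = star (M.map ⇑(Algebra.ofId ℂ A))
        rw [Matrix.star_eq_conjTranspose, Matrix.star_eq_conjTranspose]
        exact Matrix.conjTranspose_map _ hsemi }
  have hι : ∀ M : Matrix (Fin m) (Fin m) ℂ, ι M = M.map (algebraMap ℂ A) := fun M => by
    ext i j
    simp [ι, Algebra.ofId_apply]
  let ρ : Matrix (Fin m) (Fin m) ℂ →⋆ₐ[ℂ] B := π.comp ι
  -- star of T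
  have hstarMj : ∀ j, star ((α j).map (fun c => c • x j)) = (α j).map (fun c => c • x j) := by
    intro j
    ext i l
    simp only [Matrix.star_apply, Matrix.map_apply, star_smul, (hx j).star_eq]
    try rw [← (hα j).apply i l]
    try simp
  have hmapsub : ι (w - wᴴ) = w.map (algebraMap ℂ A) - wᴴ.map (algebraMap ℂ A) := by
    rw [_root_.map_sub, hι, hι]
  have hstarT : star T = T - ι (w - wᴴ) := by
    have h1 : star (w.map (algebraMap ℂ A)) = wᴴ.map (algebraMap ℂ A) := by
      rw [← hι w, ← hι wᴴ, ← map_star ι]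
      try congr 1
      try rw [Matrix.star_eq_conjTranspose]
    rw [hTdef, star_sub, star_sum, h1, hmapsub]
    simp only [hstarMj]
    abel
  set B₀ : Matrix (Fin m) (Fin m) A := ι S with hB₀def
  have hB₀star : star B₀ = B₀ := by
    rw [hB₀def, ← map_star ι, Matrix.star_eq_conjTranspose, hSH]
  have hwS : (2 * Complex.I) • S = w - wᴴ := by
    rw [hSdef]; exact smul_inv_smul₀ h2I _
  have hι2IB : ι (w - wᴴ) = (2 * Complex.I) • B₀ := by
    rw [← hwS, _root_.map_smul]
  set A₀ : Matrix (Fin m) (Fin m) A := T - Complex.I • B₀ with hA₀def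
  have hTsum : T = A₀ + Complex.I • B₀ := by rw [hA₀def]; abel
  have h2smul : (2 * Complex.I) • B₀ = Complex.I • B₀ + Complex.I • B₀ := by
    rw [two_mul, add_smul]
  have hA₀star : star A₀ = A₀ := by
    rw [hA₀def, star_sub, hstarT, star_smul, Complex.star_def, Complex.conj_I, hB₀star,
      neg_smul, hι2IB, h2smul]
    abel
  have hstarT' : star T = A₀ - Complex.I • B₀ := by
    rw [hstarT, hι2IB, h2smul, hA₀def]
    abel
  -- units
  let uS : (Matrix (Fin m) (Fin m) ℂ)ˣ := hS.isUnit.unit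
  have huS : (uS : Matrix (Fin m) (Fin m) ℂ) = S := hS.isUnit.unit_spec
  have huSinv : ((uS⁻¹ : (Matrix (Fin m) (Fin m) ℂ)ˣ) : Matrix (Fin m) (Fin m) ℂ) = S⁻¹ := by
    rw [Matrix.coe_units_inv, huS]
  let ιm : Matrix (Fin m) (Fin m) ℂ →* Matrix (Fin m) (Fin m) A := MonoidHomClass.toMonoidHom ι
  let πm : Matrix (Fin m) (Fin m) A →* B := MonoidHomClass.toMonoidHom π
  let uB : (Matrix (Fin m) (Fin m) A)ˣ := Units.map ιm uS
  have huB : Units.val uB = B₀ := by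
    rw [hB₀def, ← huS]
    rfl
  set U₀ : Matrix (Fin m) (Fin m) A := Units.val (uB⁻¹) with hU₀def
  have hU₀ : U₀ = ι (S⁻¹) := by
    have h1 : (uB⁻¹ : (Matrix (Fin m) (Fin m) A)ˣ) = Units.map ιm (uS⁻¹) :=
      (_root_.map_inv (Units.map ιm) uS).symm
    rw [hU₀def, h1, ← huSinv]
    rfl
  have hB₀U₀ : B₀ * U₀ = 1 := by rw [← huB, hU₀def]; exact uB.mul_inv
  have hU₀B₀ : U₀ * B₀ = 1 := by rw [← huB, hU₀def]; exact uB.inv_mul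
  set D : Matrix (Fin m) (Fin m) A := A₀ * (U₀ * A₀) + B₀ with hDdef
  have hI1 : T * (U₀ * star T) = D := by
    rw [hstarT', hTsum, hDdef]
    exact aux_id1 A₀ B₀ U₀ hB₀U₀ hU₀B₀
  have hI2 : star T * (U₀ * T) = D := by
    rw [hstarT', hTsum, hDdef]
    exact aux_id2 A₀ B₀ U₀ hB₀U₀ hU₀B₀
  -- positivity facts in B
  have hρ_pos : ∀ {M : Matrix (Fin m) (Fin m) ℂ}, M.PosSemidef → 0 ≤ π (ι M) := by
    intro M hM
    obtain ⟨X, h1⟩ : ∃ X : Matrix (Fin m) (Fin m) ℂ, star X * X = M := by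
      open scoped MatrixOrder in
      obtain ⟨X, hX⟩ := CStarAlgebra.nonneg_iff_eq_star_mul_self.mp hM.nonneg
      exact ⟨X, hX.symm⟩
    calc (0 : B) ≤ star (π (ι X)) * (π (ι X)) := star_mul_self_nonneg _
    _ = π (ι M) := by rw [← map_star π, ← map_star ι, ← _root_.map_mul π, ← _root_.map_mul ι, h1]
  have hb_nonneg : 0 ≤ π B₀ := by rw [hB₀def]; exact hρ_pos hS.posSemidef
  have hu'_nonneg : 0 ≤ π U₀ := by rw [hU₀]; exact hρ_pos hS.inv.posSemidef
  have ha_star : star (π A₀) = π A₀ := by rw [← map_star π, hA₀star]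
  have haua : 0 ≤ π A₀ * (π U₀ * π A₀) := by
    have h := star_left_conjugate_nonneg hu'_nonneg (π A₀)
    rwa [ha_star, mul_assoc] at h
  -- norm bound for π U₀
  have hu'_norm : ‖π U₀‖ ≤ μ := by
    rw [hU₀]
    exact NonUnitalStarAlgHom.norm_apply_le ρ (S⁻¹)
  -- real algebraMap facts
  have hstar_algR : ∀ r : ℝ, star (algebraMap ℝ B r) = algebraMap ℝ B r := fun r => by
    rw [IsScalarTower.algebraMap_apply ℝ ℂ B, ← algebraMap_star_comm]
    norm_num
  have halgR_nonneg : ∀ r : ℝ, 0 ≤ r → 0 ≤ algebraMap ℝ B r := fun r hr => by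
    have h := star_mul_self_nonneg (algebraMap ℝ B (Real.sqrt r))
    rwa [hstar_algR, ← _root_.map_mul, Real.mul_self_sqrt hr] at h
  have halgR_mono : ∀ r q : ℝ, r ≤ q → algebraMap ℝ B r ≤ algebraMap ℝ B q := fun r q h => by
    have h2 := halgR_nonneg (q - r) (sub_nonneg.2 h)
    rw [_root_.map_sub] at h2
    exact sub_nonneg.mp h2
  have hu'_le : π U₀ ≤ algebraMap ℝ B μ :=
    (IsSelfAdjoint.le_algebraMap_norm_self (IsSelfAdjoint.of_nonneg hu'_nonneg)).trans
      (halgR_mono _ _ hu'_norm)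
  let uμ : Bˣ := ⟨algebraMap ℝ B μ, algebraMap ℝ B μ⁻¹,
    by rw [← _root_.map_mul, mul_inv_cancel₀ hμpos.ne', _root_.map_one],
    by rw [← _root_.map_mul, inv_mul_cancel₀ hμpos.ne', _root_.map_one]⟩
  have hμinv_unit : IsUnit (algebraMap ℝ B μ⁻¹) := ⟨uμ⁻¹, rfl⟩
  let uBB : Bˣ := Units.map πm uB
  have huBB : Units.val uBB = π B₀ := by
    rw [← huB]
    rfl
  have huBBinv : Units.val (uBB⁻¹) = π U₀ := by
    have h1 : (uBB⁻¹ : Bˣ) = Units.map πm (uB⁻¹) := (_root_.map_inv (Units.map πm) uB).symm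
    rw [h1, hU₀def]
    rfl
  have hinvle : Units.val (uμ⁻¹) ≤ Units.val ((uBB⁻¹)⁻¹) :=
    CStarAlgebra.inv_le_inv (a := uBB⁻¹) (by rw [huBBinv]; exact hu'_nonneg)
      (by rw [huBBinv]; exact hu'_le)
  have hlow : algebraMap ℝ B μ⁻¹ ≤ π B₀ := by
    have h2 : Units.val ((uBB⁻¹)⁻¹) = π B₀ := by rw [inv_inv]; exact huBB
    rwa [h2] at hinvle
  have hd_eq : π D = π A₀ * (π U₀ * π A₀) + π B₀ := by
    rw [hDdef, _root_.map_add, _root_.map_mul, _root_.map_mul]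
  have hd_ge : algebraMap ℝ B μ⁻¹ ≤ π D := by
    rw [hd_eq]
    exact hlow.trans (le_add_of_nonneg_left haua)
  have hd_unit : IsUnit (π D) :=
    CStarAlgebra.isUnit_of_le (algebraMap ℝ B μ⁻¹) hd_ge
      (hμinv_unit.isStrictlyPositive (halgR_nonneg _ (by positivity)))
  -- the entry-isometry facts
  have hstdstar : ∀ (i j : Fin m) (c : A),
      star (Matrix.single i j c) = Matrix.single j i (star c) := by
    intro i j c
    ext p q
    simp only [Matrix.star_apply, Matrix.single, Matrix.of_apply]
    by_cases h1 : i = q <;> by_cases h2 : j = p <;> simp [h1, h2]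
  let ψ : Fin m → (A →⋆ₙₐ[ℂ] B) := fun j =>
    { toFun := fun c => π (Matrix.single j j c)
      map_smul' := fun r c => by
        show π (Matrix.single j j (r • c)) = r • π (Matrix.single j j c)
        rw [← Matrix.smul_single, _root_.map_smul]
      map_zero' := by
        show π (Matrix.single j j (0 : A)) = 0
        rw [Matrix.single_zero, _root_.map_zero]
      map_add' := fun c c' => by
        show π (Matrix.single j j (c + c'))
          = π (Matrix.single j j c) + π (Matrix.single j j c')
        rw [Matrix.single_add, _root_.map_add]
      map_mul' := fun c c' => by
        show π (Matrix.single j j (c * c'))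
          = π (Matrix.single j j c) * π (Matrix.single j j c')
        rw [← Matrix.single_mul_single_same (c := c) j j j c', _root_.map_mul]
      map_star' := fun c => by
        show π (Matrix.single j j (star c)) = star (π (Matrix.single j j c))
        rw [← hstdstar j j c, map_star] }
  have hψinj : ∀ j, Function.Injective (ψ j) := by
    intro j c c' h
    have h2 := hπ h
    have h3 := congr_fun (congr_fun h2 j) j
    simpa using h3
  have hψ_norm : ∀ (j : Fin m) (c : A), ‖π (Matrix.single j j c)‖ = ‖c‖ := fun j c =>
    NonUnitalStarAlgHom.norm_map (ψ j) (hψinj j) c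
  have hstd_norm : ∀ (i j : Fin m) (c : A), ‖π (Matrix.single i j c)‖ = ‖c‖ := by
    intro i j c
    have h1 : star (Matrix.single i j c) * Matrix.single i j c
        = Matrix.single j j (star c * c) := by
      rw [hstdstar, Matrix.single_mul_single_same]
    have h2 := CStarRing.norm_star_mul_self (x := π (Matrix.single i j c))
    rw [← map_star π, ← _root_.map_mul π, h1, hψ_norm, CStarRing.norm_star_mul_self] at h2
    have h3 := norm_nonneg (π (Matrix.single i j c))
    have h4 := norm_nonneg c
    nlinarith [h2, h3, h4]
  have hproj_norm : ∀ i : Fin m, ‖π (Matrix.single i i (1 : A))‖ ≤ 1 := by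
    intro i
    have h2 := CStarRing.norm_star_mul_self (x := π (Matrix.single i i (1 : A)))
    rw [← map_star π, hstdstar, star_one, ← _root_.map_mul π,
      Matrix.single_mul_single_same, one_mul] at h2
    nlinarith [norm_nonneg (π (Matrix.single i i (1 : A)))]
  have hentry : ∀ (X : Matrix (Fin m) (Fin m) A) (i j : Fin m), ‖X i j‖ ≤ ‖π X‖ := by
    intro X i j
    have hXij : Matrix.single i i (1 : A) * X * Matrix.single j j (1 : A)
        = Matrix.single i j (X i j) := by
      ext p q
      by_cases h1 : p = i <;> by_cases h2 : q = j
      · subst h1; subst h2; simp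
      · subst h1; simp [h2, Ne.symm h2]
      · subst h2; simp [h1, Ne.symm h1]
      · simp [h1, h2, Ne.symm h1, Ne.symm h2]
    calc ‖X i j‖ = ‖π (Matrix.single i j (X i j))‖ := (hstd_norm i j _).symm
    _ = ‖π (Matrix.single i i (1 : A)) * π X * π (Matrix.single j j (1 : A))‖ := by
        rw [← _root_.map_mul, ← _root_.map_mul, hXij]
    _ ≤ ‖π (Matrix.single i i (1 : A)) * π X‖ * ‖π (Matrix.single j j (1 : A))‖ :=
        norm_mul_le _ _
    _ ≤ (‖π (Matrix.single i i (1 : A))‖ * ‖π X‖) *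
          ‖π (Matrix.single j j (1 : A))‖ := by
        gcongr
        exact norm_mul_le _ _
    _ ≤ (1 * ‖π X‖) * 1 := by
        gcongr
        · exact hproj_norm i
        · exact hproj_norm j
    _ = ‖π X‖ := by ring
  have hπbound : ∀ X : Matrix (Fin m) (Fin m) A,
      ‖π X‖ ≤ ∑ i : Fin m, ∑ j : Fin m, ‖X i j‖ := by
    intro X
    conv_lhs => rw [Matrix.matrix_eq_sum_single X]
    rw [_root_.map_sum]
    refine (norm_sum_le _ _).trans ?_
    gcongr with i _
    rw [_root_.map_sum]
    refine (norm_sum_le _ _).trans ?_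
    gcongr with j _
    rw [hstd_norm]
  -- range of π is closed
  have hclosed : IsClosed (Set.range ⇑π) := by
    refine IsSeqClosed.isClosed ?_
    intro seq y hmem hlim
    choose V hV using hmem
    have hseq : (fun n => π (V n)) = seq := funext hV
    have hcauchy : CauchySeq (fun n => π (V n)) := by
      rw [hseq]; exact hlim.cauchySeq
    have hent : ∀ i j : Fin m, ∃ l : A,
        Filter.Tendsto (fun n => V n i j) Filter.atTop (nhds l) := by
      intro i j
      refine cauchySeq_tendsto_of_complete ?_
      rw [Metric.cauchySeq_iff] at hcauchy ⊢
      intro ε hε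
      obtain ⟨N, hN⟩ := hcauchy ε hε
      refine ⟨N, fun n hn l hl => ?_⟩
      have h2 := hN n hn l hl
      rw [dist_eq_norm] at h2 ⊢
      refine lt_of_le_of_lt ?_ h2
      have h3 : V n i j - V l i j = (V n - V l) i j := by simp [Matrix.sub_apply]
      rw [h3, ← _root_.map_sub π]
      exact hentry _ i j
    choose L hL using hent
    have hXlim : Filter.Tendsto (fun n => π (V n)) Filter.atTop (nhds (π (Matrix.of L))) := by
      rw [tendsto_iff_norm_sub_tendsto_zero]
      have key : Filter.Tendsto (fun n => ∑ i : Fin m, ∑ j : Fin m,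
          ‖(V n - Matrix.of L) i j‖) Filter.atTop (nhds 0) := by
        have h5 : ∀ i j : Fin m,
            Filter.Tendsto (fun n => ‖(V n - Matrix.of L) i j‖) Filter.atTop (nhds 0) := by
          intro i j
          have := (tendsto_iff_norm_sub_tendsto_zero).mp (hL i j)
          simpa [Matrix.sub_apply] using this
        have h6 := tendsto_finset_sum (Finset.univ (α := Fin m))
          (fun i _ => tendsto_finset_sum (Finset.univ (α := Fin m)) (fun j _ => h5 i j))
        simpa using h6
      refine squeeze_zero (fun n => norm_nonneg _) (fun n => ?_) key
      rw [← _root_.map_sub π]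
      exact hπbound _
    have hy : y = π (Matrix.of L) := by
      refine tendsto_nhds_unique ?_ hXlim
      rw [hseq]; exact hlim
    exact hy ▸ Set.mem_range_self _
  haveI hclosed' : IsClosed ((π.range : StarSubalgebra ℂ B) : Set B) := by
    have heq : ((π.range : StarSubalgebra ℂ B) : Set B) = Set.range ⇑π := by
      ext z
      exact ⟨fun ⟨q, hq⟩ => ⟨q, hq⟩, fun ⟨q, hq⟩ => ⟨q, hq⟩⟩
    rw [heq]; exact hclosed
  -- pull invertibility of π D back to D
  have hDunit : IsUnit D := by
    have hmem : π D ∈ π.range := ⟨D, rfl⟩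
    have hsub : IsUnit (⟨π D, hmem⟩ : π.range) :=
      (StarSubalgebra.coe_isUnit π.range (a := ⟨π D, hmem⟩)).mp hd_unit
    obtain ⟨v, hv⟩ := hsub
    obtain ⟨Y, hY⟩ := ((v⁻¹ : (π.range)ˣ) : π.range).2
    have hv1 : ((v : π.range) : B) = π D := by rw [hv]
    have hmul1 : π D * π Y = 1 := by
      have h3 := congrArg (fun z : π.range => (z : B)) v.mul_inv
      simp only [MulMemClass.coe_mul, OneMemClass.coe_one] at h3
      rw [hv1, ← hY] at h3
      exact h3
    have hmul2 : π Y * π D = 1 := by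
      have h3 := congrArg (fun z : π.range => (z : B)) v.inv_mul
      simp only [MulMemClass.coe_mul, OneMemClass.coe_one] at h3
      rw [hv1, ← hY] at h3
      exact h3
    have hDY : D * Y = 1 := hπ (by rw [_root_.map_mul, _root_.map_one]; exact hmul1)
    have hYD : Y * D = 1 := hπ (by rw [_root_.map_mul, _root_.map_one]; exact hmul2)
    exact ⟨⟨D, Y, hDY, hYD⟩, rfl⟩
  -- invertibility of T
  obtain ⟨Dv, hDv1, hDv2⟩ : ∃ Dv, D * Dv = 1 ∧ Dv * D = 1 :=
    ⟨Units.val (hDunit.unit⁻¹), hDunit.mul_val_inv, hDunit.val_inv_mul⟩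
  have hTR : T * (U₀ * star T * Dv) = 1 := by
    calc T * (U₀ * star T * Dv) = (T * (U₀ * star T)) * Dv := by rw [← mul_assoc]
    _ = D * Dv := by rw [hI1]
    _ = 1 := hDv1
  have hLT : (Dv * (star T * U₀)) * T = 1 := by
    calc (Dv * (star T * U₀)) * T = Dv * (star T * (U₀ * T)) := by
          rw [mul_assoc, mul_assoc]
    _ = Dv * D := by rw [hI2]
    _ = 1 := hDv2
  have hLR : Dv * (star T * U₀) = U₀ * star T * Dv := by
    calc Dv * (star T * U₀) = (Dv * (star T * U₀)) * (T * (U₀ * star T * Dv)) := by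
          rw [hTR, mul_one]
    _ = ((Dv * (star T * U₀)) * T) * (U₀ * star T * Dv) := by simp only [mul_assoc]
    _ = U₀ * star T * Dv := by rw [hLT, one_mul]
  have hRT : (U₀ * star T * Dv) * T = 1 := by rw [← hLR]; exact hLT
  have hTunit : IsUnit T := ⟨⟨T, U₀ * star T * Dv, hTR, hRT⟩, rfl⟩
  -- norm estimate for the inverse
  have htunit : IsUnit (π T) := hTunit.map π
  set s : B := Units.val (htunit.unit⁻¹) with hsdef
  have hsinv : Ring.inverse (π T) = s := by
    rw [hsdef]
    conv_lhs => rw [← htunit.unit_spec]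
    exact Ring.inverse_unit _
  have hst : s * π T = 1 := by rw [hsdef]; exact htunit.unit.inv_mul
  have hts : π T * s = 1 := by rw [hsdef]; exact htunit.unit.mul_inv
  have htdiff : π T - star (π T) = (2 * Complex.I) • π B₀ := by
    rw [← map_star π, hstarT', hTsum, ← _root_.map_smul π, ← _root_.map_sub π]
    congr 1
    rw [h2smul]
    abel
  have hn : s * π B₀ * star s = (2 * Complex.I)⁻¹ • (star s - s) := by
    have hx1 : star (π T) * star s = 1 := by simpa using congrArg star hst
    have h1 : s * (π T - star (π T)) * star s = star s - s := by
      rw [mul_sub, sub_mul, hst, one_mul, mul_assoc, hx1, mul_one]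
    rw [htdiff] at h1
    have h2 : s * ((2 * Complex.I) • π B₀) * star s
        = (2 * Complex.I) • (s * π B₀ * star s) := by
      rw [mul_smul_comm, smul_mul_assoc]
    rw [h2] at h1
    rw [← h1, inv_smul_smul₀ h2I]
  have hconj : s * (algebraMap ℝ B μ⁻¹) * star s ≤ s * π B₀ * star s :=
    star_right_conjugate_le_conjugate hlow s
  have hleft : s * (algebraMap ℝ B μ⁻¹) * star s = μ⁻¹ • (s * star s) := by
    rw [Algebra.algebraMap_eq_smul_one, mul_smul_comm, mul_one, smul_mul_assoc]
  have hmono : ‖μ⁻¹ • (s * star s)‖ ≤ ‖s * π B₀ * star s‖ := by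
    refine CStarAlgebra.norm_le_norm_of_nonneg_of_le ?_ (hleft ▸ hconj)
    rw [← hleft]
    exact star_right_conjugate_nonneg (halgR_nonneg _ (by positivity)) s
  have hnorm1 : ‖μ⁻¹ • (s * star s)‖ = μ⁻¹ * (‖s‖ * ‖s‖) := by
    rw [norm_smul, Real.norm_eq_abs, abs_of_pos (by positivity), CStarRing.norm_self_mul_star]
  have hnorm2 : ‖s * π B₀ * star s‖ ≤ ‖s‖ := by
    rw [hn, norm_smul]
    have h3 : ‖(2 * Complex.I)⁻¹‖ = 2⁻¹ := by
      rw [norm_inv, norm_mul, Complex.norm_I]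
      norm_num
    rw [h3]
    calc 2⁻¹ * ‖star s - s‖ ≤ 2⁻¹ * (‖star s‖ + ‖s‖) := by
          gcongr
          exact norm_sub_le _ _
    _ = ‖s‖ := by rw [norm_star]; ring
  have hfinal : ‖s‖ ≤ μ := by
    have h := (hnorm1 ▸ hmono).trans hnorm2
    rcases eq_or_lt_of_le (norm_nonneg s) with h0 | h0
    · rw [← h0]; exact hμpos.le
    · nlinarith [mul_inv_cancel₀ hμpos.ne', hμpos]
  exact ⟨hTunit, by rw [hsinv]; exact hfinal⟩
end

section
/- Fix θ ∈ ℝ \ {0} and let G be a solution of z G² − z G + 1 = 0 on ℂ \ [0,4]. The equation θ² G(t)² − (1 − G(t)) = 0 combined with t G(t)² − t G(t) + 1 = 0 has the real solutions t = ρ_θ^± := 2θ⁴ / (−(3θ²+1) ± √(4θ²+1)(θ²+1)), and at these points G(ρ_θ^±) = 1/2 + (−(θ²+1) ± √(4θ²+1))/(2θ²). -/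
lemma outlier_aux (θ : ℝ) (hθ : θ ≠ 0) (g t : ℂ) (ε s : ℝ)
    (hε : ε = 1 ∨ ε = -1) (hs : s ^ 2 = 4 * θ ^ 2 + 1)
    (hg0 : 2 * (θ : ℂ) ^ 2 * g + 1 - ε * s = 0)
    (h1 : t * g ^ 2 - t * g + 1 = 0) :
    g = ((1 / 2 + (-(θ ^ 2 + 1) + ε * s) / (2 * θ ^ 2) : ℝ) : ℂ) ∧
      t = ((2 * θ ^ 4 / (-(3 * θ ^ 2 + 1) + ε * (θ ^ 2 + 1) * s) : ℝ) : ℂ) := by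
  have hθC : (θ : ℂ) ≠ 0 := by exact_mod_cast hθ
  have hε2 : ε ^ 2 = 1 := by rcases hε with h | h <;> rw [h] <;> ring
  have hε2C : ((ε : ℂ)) ^ 2 = 1 := by exact_mod_cast hε2
  have hsC : ((s : ℂ)) ^ 2 = 4 * (θ : ℂ) ^ 2 + 1 := by exact_mod_cast hs
  have hg : g = ((1 / 2 + (-(θ ^ 2 + 1) + ε * s) / (2 * θ ^ 2) : ℝ) : ℂ) := by
    push_cast
    field_simp
    linear_combination hg0
  refine ⟨hg, ?_⟩
  have hθ6 : (0:ℝ) < θ ^ 6 := by positivity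
  have hD : (-(3 * θ ^ 2 + 1) + ε * (θ ^ 2 + 1) * s) ≠ 0 := by
    intro h0
    have e : ε * (θ ^ 2 + 1) * s = 3 * θ ^ 2 + 1 := by linarith
    have e2 : (ε * (θ ^ 2 + 1) * s) ^ 2 = (3 * θ ^ 2 + 1) ^ 2 := by rw [e]
    have : (4:ℝ) * θ ^ 6 = 0 := by
      linear_combination e2 - ε^2 * (θ^2+1)^2 * hs - (θ^2+1)^2*(4*θ^2+1) * hε2
    linarith
  have hDC : ((-(3 * (θ:ℂ) ^ 2 + 1) + (ε:ℂ) * ((θ:ℂ) ^ 2 + 1) * (s:ℂ))) ≠ 0 := by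
    have := hD
    intro h0
    apply this
    exact_mod_cast h0
  rw [hg] at h1
  push_cast at h1 ⊢
  field_simp at h1
  rw [eq_div_iff hDC]
  have h2θ : (2 * (θ:ℂ) ^ 2) ≠ 0 := by simp [hθC]
  apply mul_right_cancel₀ h2θ
  linear_combination (-(θ:ℂ)^2)*h1 + (θ:ℂ)^2*t*(s:ℂ)^2*hε2C + (θ:ℂ)^2*t*hsC

/-- Algebraic determination of the outliers: if `t g² - t g + 1 = 0` and `θ² g² = 1 - g`
with `θ ≠ 0`, then (with matched signs `ε = ±1`)
`g = 1/2 + (-(θ²+1) + ε√(4θ²+1))/(2θ²)` and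
`t = 2θ⁴/(-(3θ²+1) + ε(θ²+1)√(4θ²+1))`. -/
theorem outlier_values (θ : ℝ) (hθ : θ ≠ 0) (g t : ℂ)
    (h1 : t * g ^ 2 - t * g + 1 = 0)
    (h2 : (θ : ℂ) ^ 2 * g ^ 2 = 1 - g) :
    ∃ ε : ℝ, (ε = 1 ∨ ε = -1) ∧
      g = ((1 / 2 + (-(θ ^ 2 + 1) + ε * Real.sqrt (4 * θ ^ 2 + 1)) / (2 * θ ^ 2) : ℝ) : ℂ) ∧
      t = ((2 * θ ^ 4 /
        (-(3 * θ ^ 2 + 1) + ε * (θ ^ 2 + 1) * Real.sqrt (4 * θ ^ 2 + 1)) : ℝ) : ℂ) := by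
  set s := Real.sqrt (4 * θ ^ 2 + 1) with hsdef
  have hs : s ^ 2 = 4 * θ ^ 2 + 1 := Real.sq_sqrt (by positivity)
  have hsC : ((s : ℂ)) ^ 2 = 4 * (θ : ℂ) ^ 2 + 1 := by exact_mod_cast hs
  have key : (2 * (θ:ℂ) ^ 2 * g + 1 - (1:ℝ) * s) * (2 * (θ:ℂ) ^ 2 * g + 1 - (-1:ℝ) * s) = 0 := by
    push_cast
    linear_combination 4 * (θ:ℂ)^2 * h2 - hsC
  rcases mul_eq_zero.mp key with h | h
  · exact ⟨1, Or.inl rfl, outlier_aux θ hθ g t 1 s (Or.inl rfl) hs (by push_cast at h ⊢; linear_combination h) h1⟩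
  · exact ⟨-1, Or.inr rfl, outlier_aux θ hθ g t (-1) s (Or.inr rfl) hs (by push_cast at h ⊢; linear_combination h) h1⟩
end

section
/- Let f: ℝ → ℝ be Lipschitz with constant C_L. Then its extension to Hermitian n×n matrices by functional calculus is C_L-Lipschitz with respect to the Hilbert–Schmidt norm: for all Hermitian A, B, ‖f(A) − f(B)‖_HS ≤ C_L ‖A − B‖_HS, where ‖M‖_HS = (Tr M²)^{1/2} for Hermitian M. -/
open Matrix Finset

lemma trace_conj' {n : ℕ} {U : Matrix (Fin n) (Fin n) ℂ} (hU : star U * U = 1)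
    (M : Matrix (Fin n) (Fin n) ℂ) : (U * M * star U).trace = M.trace := by
  rw [Matrix.trace_mul_comm, ← Matrix.mul_assoc, hU, Matrix.one_mul]

lemma conj_mul_conj' {n : ℕ} {U V : Matrix (Fin n) (Fin n) ℂ} (hU : U * star U = 1)
    (X Y : Matrix (Fin n) (Fin n) ℂ) :
    (U * X * star U) * (V * Y * star V)
      = U * (X * ((star U * V) * Y * (star V * U))) * star U := by
  simp [Matrix.mul_assoc, hU]

lemma trace_diag_conj' {n : ℕ} (da db : Fin n → ℝ) (W : Matrix (Fin n) (Fin n) ℂ) :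
    ((Matrix.diagonal (fun i => (da i : ℂ)) * (W * Matrix.diagonal (fun j => (db j : ℂ)) * star W)).trace).re
      = ∑ i, ∑ j, da i * db j * Complex.normSq (W i j) := by
  have h : (Matrix.diagonal (fun i => (da i : ℂ)) * (W * Matrix.diagonal (fun j => (db j : ℂ)) * star W))
      = (Matrix.diagonal (fun i => (da i : ℂ)) * W * Matrix.diagonal (fun j => (db j : ℂ))) * star W := by
    noncomm_ring
  rw [h]
  have e1 : ∀ i j, (Matrix.diagonal (fun i => (da i : ℂ)) * W * Matrix.diagonal (fun j => (db j : ℂ))) i j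
      = (da i : ℂ) * W i j * (db j : ℂ) := by
    intro i j; rw [Matrix.mul_diagonal, Matrix.diagonal_mul]
  generalize hM : (Matrix.diagonal (fun i => (da i : ℂ)) * W * Matrix.diagonal (fun j => (db j : ℂ))) = M at e1 ⊢
  simp only [Matrix.trace, Matrix.diag, Matrix.mul_apply, Matrix.conjTranspose_apply, Complex.re_sum]
  apply Finset.sum_congr rfl; intro i _
  apply Finset.sum_congr rfl; intro j _
  rw [e1]
  simp [Complex.normSq_apply, Complex.mul_re, Complex.mul_im]
  ring

/-- Functional calculus of a Hermitian matrix `A` applied to `f : ℝ → ℝ`. -/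
noncomputable def hermFun {n : ℕ} {A : Matrix (Fin n) (Fin n) ℂ} (hA : A.IsHermitian)
    (f : ℝ → ℝ) : Matrix (Fin n) (Fin n) ℂ :=
  (hA.eigenvectorUnitary : Matrix (Fin n) (Fin n) ℂ) *
    Matrix.diagonal (fun i => (f (hA.eigenvalues i) : ℂ)) *
    star (hA.eigenvectorUnitary : Matrix (Fin n) (Fin n) ℂ)

lemma hermFun_trace {n : ℕ} {A B : Matrix (Fin n) (Fin n) ℂ}
    (hA : A.IsHermitian) (hB : B.IsHermitian) (g : ℝ → ℝ) :
    ((hermFun hA g - hermFun hB g) * (hermFun hA g - hermFun hB g)).trace.re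
      = ∑ i, ∑ j, (g (hA.eigenvalues i) - g (hB.eigenvalues j))^2 *
          Complex.normSq ((star (hA.eigenvectorUnitary : Matrix (Fin n) (Fin n) ℂ) *
            (hB.eigenvectorUnitary : Matrix (Fin n) (Fin n) ℂ)) i j) := by
  set U : Matrix (Fin n) (Fin n) ℂ := (hA.eigenvectorUnitary : Matrix (Fin n) (Fin n) ℂ) with hUdef
  set V : Matrix (Fin n) (Fin n) ℂ := (hB.eigenvectorUnitary : Matrix (Fin n) (Fin n) ℂ) with hVdef
  have hU1 : star U * U = 1 := Matrix.mem_unitaryGroup_iff'.mp hA.eigenvectorUnitary.2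
  have hU2 : U * star U = 1 := Matrix.mem_unitaryGroup_iff.mp hA.eigenvectorUnitary.2
  have hV1 : star V * V = 1 := Matrix.mem_unitaryGroup_iff'.mp hB.eigenvectorUnitary.2
  have hV2 : V * star V = 1 := Matrix.mem_unitaryGroup_iff.mp hB.eigenvectorUnitary.2
  set W : Matrix (Fin n) (Fin n) ℂ := star U * V with hWdef
  have hsW : star W = star V * U := by simp [hWdef]
  have hW1 : W * star W = 1 := by
    rw [hsW, hWdef, Matrix.mul_assoc, ← Matrix.mul_assoc V, hV2, Matrix.one_mul, hU1]
  have hW2 : star W * W = 1 := by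
    rw [hsW, hWdef, Matrix.mul_assoc, ← Matrix.mul_assoc U, hU2, Matrix.one_mul, hV1]
  set ga : Fin n → ℝ := fun i => g (hA.eigenvalues i) with hga
  set gb : Fin n → ℝ := fun j => g (hB.eigenvalues j) with hgb
  have row : ∀ i, ∑ j, Complex.normSq (W i j) = 1 := by
    intro i
    have h := congrFun (congrFun hW1 i) i
    simp only [Matrix.mul_apply, Matrix.conjTranspose_apply, Matrix.one_apply_eq] at h
    have h2 := congrArg Complex.re h
    simpa [Complex.mul_conj, Complex.re_sum] using h2
  have col : ∀ j, ∑ i, Complex.normSq (W i j) = 1 := by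
    intro j
    have h := congrFun (congrFun hW2 j) j
    simp only [Matrix.mul_apply, Matrix.conjTranspose_apply, Matrix.one_apply_eq] at h
    have h2 := congrArg Complex.re h
    simpa [mul_comm, Complex.mul_conj, Complex.re_sum] using h2
  -- cross term
  have hPQ : ((hermFun hA g) * (hermFun hB g)).trace.re
      = ∑ i, ∑ j, ga i * gb j * Complex.normSq (W i j) := by
    show ((U * _ * star U) * (V * _ * star V)).trace.re = _
    rw [conj_mul_conj' hU2, trace_conj' hU1, ← hWdef, ← hsW, trace_diag_conj']
  have hPP : ((hermFun hA g) * (hermFun hA g)).trace.re = ∑ i, (ga i)^2 := by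
    show ((U * _ * star U) * (U * _ * star U)).trace.re = _
    rw [conj_mul_conj' hU2, trace_conj' hU1, hU1]
    simp [Matrix.diagonal_mul_diagonal, Matrix.trace_diagonal, Complex.re_sum, sq]
    rfl
  have hQQ : ((hermFun hB g) * (hermFun hB g)).trace.re = ∑ j, (gb j)^2 := by
    show ((V * _ * star V) * (V * _ * star V)).trace.re = _
    rw [conj_mul_conj' hV2, trace_conj' hV1, hV1]
    simp [Matrix.diagonal_mul_diagonal, Matrix.trace_diagonal, Complex.re_sum, sq]
    rfl
  have hQP : ((hermFun hB g) * (hermFun hA g)).trace = ((hermFun hA g) * (hermFun hB g)).trace :=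
    Matrix.trace_mul_comm _ _
  have expand : (hermFun hA g - hermFun hB g) * (hermFun hA g - hermFun hB g)
      = (hermFun hA g * hermFun hA g) - (hermFun hA g * hermFun hB g)
        - (hermFun hB g * hermFun hA g) + (hermFun hB g * hermFun hB g) := by
    noncomm_ring
  rw [expand, Matrix.trace_add, Matrix.trace_sub, Matrix.trace_sub, hQP]
  simp only [Complex.add_re, Complex.sub_re]
  rw [hPP, hQQ, hPQ]
  have hrow : ∑ i, (ga i)^2 = ∑ i, ∑ j, (ga i)^2 * Complex.normSq (W i j) := by
    apply Finset.sum_congr rfl; intro i _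
    rw [← Finset.mul_sum, row i, mul_one]
  have hcol : ∑ j, (gb j)^2 = ∑ i, ∑ j, (gb j)^2 * Complex.normSq (W i j) := by
    rw [Finset.sum_comm]
    apply Finset.sum_congr rfl; intro j _
    rw [← Finset.mul_sum, col j, mul_one]
  rw [hrow, hcol, ← Finset.sum_sub_distrib, ← Finset.sum_sub_distrib, ← Finset.sum_add_distrib]
  apply Finset.sum_congr rfl; intro i _
  rw [← Finset.sum_sub_distrib, ← Finset.sum_sub_distrib, ← Finset.sum_add_distrib]
  apply Finset.sum_congr rfl; intro j _
  ring

/-- A Lipschitz `f : ℝ → ℝ` extends to a Lipschitz map on Hermitian matrices with the same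
constant, for the Hilbert–Schmidt norm `(Tr M²)^{1/2}`. -/
theorem lipschitz_functional_calculus {n : ℕ} (f : ℝ → ℝ) (CL : ℝ) (hCL : 0 ≤ CL)
    (hf : ∀ s t : ℝ, |f s - f t| ≤ CL * |s - t|)
    (A B : Matrix (Fin n) (Fin n) ℂ) (hA : A.IsHermitian) (hB : B.IsHermitian) :
    Real.sqrt (((hermFun hA f - hermFun hB f) * (hermFun hA f - hermFun hB f)).trace.re) ≤
      CL * Real.sqrt (((A - B) * (A - B)).trace.re) := by
  have hid : ∀ {M : Matrix (Fin n) (Fin n) ℂ} (hM : M.IsHermitian), hermFun hM id = M := by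
    intro M hM
    have := hM.spectral_theorem
    rw [hermFun]
    rw [Unitary.conjStarAlgAut_apply] at this
    exact this.symm
  have hAB : A - B = hermFun hA id - hermFun hB id := by rw [hid hA, hid hB]
  rw [hAB, hermFun_trace hA hB f, hermFun_trace hA hB id]
  set W : Matrix (Fin n) (Fin n) ℂ := star (hA.eigenvectorUnitary : Matrix (Fin n) (Fin n) ℂ) *
      (hB.eigenvectorUnitary : Matrix (Fin n) (Fin n) ℂ)
  rw [show CL * Real.sqrt (∑ i, ∑ j, (id (hA.eigenvalues i) - id (hB.eigenvalues j))^2 * Complex.normSq (W i j))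
      = Real.sqrt (CL^2 * ∑ i, ∑ j, (id (hA.eigenvalues i) - id (hB.eigenvalues j))^2 * Complex.normSq (W i j)) by
    rw [Real.sqrt_mul (sq_nonneg CL), Real.sqrt_sq hCL]]
  apply Real.sqrt_le_sqrt
  rw [Finset.mul_sum]
  apply Finset.sum_le_sum; intro i _
  rw [Finset.mul_sum]
  apply Finset.sum_le_sum; intro j _
  rw [← mul_assoc]
  apply mul_le_mul_of_nonneg_right _ (Complex.normSq_nonneg _)
  have h1 := hf (hA.eigenvalues i) (hB.eigenvalues j)
  have h2 : |f (hA.eigenvalues i) - f (hB.eigenvalues j)|^2 ≤ (CL * |hA.eigenvalues i - hB.eigenvalues j|)^2 :=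
    pow_le_pow_left₀ (abs_nonneg _) h1 2
  calc (f (hA.eigenvalues i) - f (hB.eigenvalues j))^2
      = |f (hA.eigenvalues i) - f (hB.eigenvalues j)|^2 := (sq_abs _).symm
    _ ≤ (CL * |hA.eigenvalues i - hB.eigenvalues j|)^2 := h2
    _ = CL^2 * (id (hA.eigenvalues i) - id (hB.eigenvalues j))^2 := by
        rw [mul_pow, sq_abs]; rfl
end
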